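/- Let V be a finite set of N nodes partitioned into two sensitive groups S₀ and S₁ of sizes N₀ ≥ 1 and N₁ ≥ 1, with features X : V → ℝ^d and iterates F⁽ᵏ⁾ produced by the fairness-aware message passing. For each k ≥ 0, let μ⁽ˢ⁾_k = (1/N_s)·Σ_{i∈S_s} F⁽ᵏ⁾_i denote the group means of F⁽ᵏ⁾ (so μ⁽ˢ⁾_0 = μ⁽ˢ⁾ are the group means of X), and let Δᵏ ∈ ℝ^d be the componentwise maximal deviation of F⁽ᵏ⁾ from its overall mean. Then for every K ≥ 1, ‖(1/N₀)·Σ_{i∈S₀} F⁽ᴷ⁾_i − (1/N₁)·Σ_{j∈S₁} F⁽ᴷ⁾_j‖ ≤ (3 − (1/(N₀N₁²) + 1/(N₀²N₁))·Σ_{i∈S₀} Σ_{j∈S₁} k(F⁽ᴷ⁻¹⁾_i, F⁽ᴷ⁻¹⁾_j))·‖μ⁽⁰⁾_{K−1} − μ⁽¹⁾_{K−1}‖ + ‖μ⁽⁰⁾ − μ⁽¹⁾‖ + (2 + 2/N₀ + 2/N₁)·‖Δᴷ⁻¹‖ + 2·‖Δ⁰‖. -/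

import Mathlib

open Matrix Finset

/-- RBF kernel `k(x,y) = exp(-α‖x-y‖²)`. -/
noncomputable def ker {d : ℕ} (α : ℝ) (x y : EuclideanSpace ℝ (Fin d)) : ℝ :=
  Real.exp (-α * ‖x - y‖ ^ 2)

/-- The sensitive group `S_b`, where group membership is given by `grp`
(`false` encodes `S₀` and `true` encodes `S₁`). -/
def sgrp {V : Type*} [Fintype V] (grp : V → Bool) (b : Bool) : Finset V :=
  Finset.univ.filter (fun i => grp i = b)

/-- Fairness-aware message passing: `F 0 = X`, and each layer `k ≥ 1` updates node `i`
(lying in group `grp i`, with opposite group `!grp i`) by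
`F⁽ᵏ⁾_i = X_i + (1/|N(i)|)·Σ_{u∈N(i)} F⁽ᵏ⁻¹⁾_u
       − (1/N_t²)·Σ_{u∈S_t} k(F⁽ᵏ⁻¹⁾_u,F⁽ᵏ⁻¹⁾_i)·F⁽ᵏ⁻¹⁾_u
       + (1/(N₀N₁))·Σ_{u∈S_{1−t}} k(F⁽ᵏ⁻¹⁾_u,F⁽ᵏ⁻¹⁾_i)·F⁽ᵏ⁻¹⁾_u
       + ((1/N_t²)·Σ_{u∈S_t} k(...) − (1/(N₀N₁))·Σ_{u∈S_{1−t}} k(...))·F⁽ᵏ⁻¹⁾_i`. -/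
def FairMP {V : Type*} [Fintype V] {d : ℕ} (α : ℝ) (grp : V → Bool)
    (Nb : V → Finset V) (X : V → EuclideanSpace ℝ (Fin d))
    (F : ℕ → V → EuclideanSpace ℝ (Fin d)) : Prop :=
  F 0 = X ∧
  ∀ k : ℕ, 1 ≤ k → ∀ i : V,
    F k i = X i + (((Nb i).card : ℝ)⁻¹) • ∑ u ∈ Nb i, F (k-1) u
      - (1 / ((sgrp grp (grp i)).card : ℝ) ^ 2) •
          ∑ u ∈ sgrp grp (grp i), ker α (F (k-1) u) (F (k-1) i) • F (k-1) u
      + (1 / (((sgrp grp false).card : ℝ) * ((sgrp grp true).card : ℝ))) •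
          ∑ u ∈ sgrp grp (!grp i), ker α (F (k-1) u) (F (k-1) i) • F (k-1) u
      + ((1 / ((sgrp grp (grp i)).card : ℝ) ^ 2) *
            ∑ u ∈ sgrp grp (grp i), ker α (F (k-1) u) (F (k-1) i)
         - (1 / (((sgrp grp false).card : ℝ) * ((sgrp grp true).card : ℝ))) *
            ∑ u ∈ sgrp grp (!grp i), ker α (F (k-1) u) (F (k-1) i)) • F (k-1) i

/-- Componentwise maximal deviation of the rows of `F` from the overall mean row:
`(dev F)_m = max_{i∈V} |F_{i,m} − (1/N)·Σ_{j∈V} F_{j,m}|`. -/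
noncomputable def dev {V : Type*} [Fintype V] {d : ℕ}
    (F : V → EuclideanSpace ℝ (Fin d)) : EuclideanSpace ℝ (Fin d) :=
  WithLp.toLp 2 (fun m => ⨆ i : V, |F i m - (1 / (Fintype.card V : ℝ)) * ∑ j : V, F j m|)

lemma fmp_ker_nonneg {d : ℕ} (α : ℝ) (x y : EuclideanSpace ℝ (Fin d)) : 0 ≤ ker α x y :=
  (Real.exp_pos _).le
lemma fmp_ker_le_one {d : ℕ} {α : ℝ} (hα : 0 < α) (x y : EuclideanSpace ℝ (Fin d)) :
    ker α x y ≤ 1 := by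
  apply Real.exp_le_one_iff.mpr
  have : (0:ℝ) ≤ α * ‖x - y‖ ^ 2 := by positivity
  linarith
lemma fmp_ker_symm {d : ℕ} (α : ℝ) (x y : EuclideanSpace ℝ (Fin d)) :
    ker α x y = ker α y x := by rw [ker, ker, norm_sub_rev]
lemma fmp_antisym_sum {M : Type*} [AddCommGroup M] [Module ℝ M] {ι : Type*}
    (s : Finset ι) (f : ι → ι → M)
    (h : ∀ i j, f i j = - f j i) : ∑ i ∈ s, ∑ j ∈ s, f i j = 0 := by
  have h2 : ∑ i ∈ s, ∑ j ∈ s, f i j = - ∑ i ∈ s, ∑ j ∈ s, f i j := by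
    calc ∑ i ∈ s, ∑ j ∈ s, f i j = ∑ i ∈ s, ∑ j ∈ s, -(f j i) :=
          Finset.sum_congr rfl fun i _ => Finset.sum_congr rfl fun j _ => h i j
      _ = - ∑ i ∈ s, ∑ j ∈ s, f j i := by simp
      _ = - ∑ i ∈ s, ∑ j ∈ s, f i j := by rw [Finset.sum_comm]
  have h3 : (2:ℝ) • (∑ i ∈ s, ∑ j ∈ s, f i j) = 0 := by
    rw [two_smul]; nth_rewrite 2 [h2]; simp
  simpa using (smul_eq_zero.mp h3).resolve_left (by norm_num)
lemma fmp_sum_apply {ι : Type*} {d : ℕ} (s : Finset ι) (f : ι → EuclideanSpace ℝ (Fin d))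
    (m : Fin d) : (∑ i ∈ s, f i) m = ∑ i ∈ s, f i m := by
  rw [WithLp.ofLp_sum, Finset.sum_apply]
lemma fmp_norm_le {d : ℕ} {v w : EuclideanSpace ℝ (Fin d)} (h : ∀ m, |v m| ≤ w m) :
    ‖v‖ ≤ ‖w‖ := by
  rw [EuclideanSpace.norm_eq, EuclideanSpace.norm_eq]
  apply Real.sqrt_le_sqrt
  apply Finset.sum_le_sum
  intro m _
  have h2 : ‖v m‖ ≤ ‖w m‖ := by
    rw [Real.norm_eq_abs, Real.norm_eq_abs]
    exact (h m).trans (le_abs_self _)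
  exact pow_le_pow_left₀ (norm_nonneg _) h2 2
lemma fmp_avg_dev {ι : Type*} (s : Finset ι) (hs : s.Nonempty) (a : ι → ℝ) (mb Δ : ℝ)
    (h : ∀ i ∈ s, |a i - mb| ≤ Δ) : |(s.card:ℝ)⁻¹ * ∑ i ∈ s, a i - mb| ≤ Δ := by
  have hc : (0:ℝ) < s.card := by exact_mod_cast Finset.card_pos.mpr hs
  have heq : (s.card:ℝ)⁻¹ * ∑ i ∈ s, a i - mb = (s.card:ℝ)⁻¹ * ∑ i ∈ s, (a i - mb) := by
    rw [Finset.sum_sub_distrib, Finset.sum_const, nsmul_eq_mul, mul_sub]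
    congr 1
    field_simp
  rw [heq, abs_mul, abs_inv, abs_of_pos hc]
  calc (s.card:ℝ)⁻¹ * |∑ i ∈ s, (a i - mb)|
      ≤ (s.card:ℝ)⁻¹ * ∑ i ∈ s, |a i - mb| := by
        gcongr; exact Finset.abs_sum_le_sum_abs _ _
    _ ≤ (s.card:ℝ)⁻¹ * ∑ i ∈ s, Δ :=
        mul_le_mul_of_nonneg_left (Finset.sum_le_sum fun i hi => h i hi) (by positivity)
    _ = Δ := by rw [Finset.sum_const, nsmul_eq_mul]; field_simp


/-- For every `K ≥ 1`, the group-mean gap of `F⁽ᴷ⁾` is bounded by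
`(3 − (1/(N₀N₁²) + 1/(N₀²N₁))·Σ_{i∈S₀}Σ_{j∈S₁} k(F⁽ᴷ⁻¹⁾_i, F⁽ᴷ⁻¹⁾_j))·‖μ⁽⁰⁾_{K−1} − μ⁽¹⁾_{K−1}‖
  + ‖μ⁽⁰⁾ − μ⁽¹⁾‖ + (2 + 2/N₀ + 2/N₁)·‖Δᴷ⁻¹‖ + 2·‖Δ⁰‖`. -/
theorem stmt11 {V : Type*} [Fintype V] {d : ℕ} {α : ℝ} (hα : 0 < α)
    (grp : V → Bool) (N₀ N₁ : ℕ)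
    (hcard0 : (sgrp grp false).card = N₀) (hcard1 : (sgrp grp true).card = N₁)
    (hN₀ : 1 ≤ N₀) (hN₁ : 1 ≤ N₁)
    (Nb : V → Finset V) (hNb : ∀ i, (Nb i).Nonempty)
    (X : V → EuclideanSpace ℝ (Fin d)) (F : ℕ → V → EuclideanSpace ℝ (Fin d))
    (hF : FairMP α grp Nb X F)
    (μ : ℕ → Bool → EuclideanSpace ℝ (Fin d))
    (hμ : ∀ k b, μ k b = (((sgrp grp b).card : ℝ))⁻¹ • ∑ i ∈ sgrp grp b, F k i) :
    ∀ K : ℕ, 1 ≤ K →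
      ‖(1 / (N₀ : ℝ)) • ∑ i ∈ sgrp grp false, F K i
          - (1 / (N₁ : ℝ)) • ∑ j ∈ sgrp grp true, F K j‖ ≤
        (3 - (1 / ((N₀ : ℝ) * (N₁ : ℝ) ^ 2) + 1 / ((N₀ : ℝ) ^ 2 * (N₁ : ℝ))) *
            ∑ i ∈ sgrp grp false, ∑ j ∈ sgrp grp true, ker α (F (K-1) i) (F (K-1) j)) *
          ‖μ (K-1) false - μ (K-1) true‖
        + ‖μ 0 false - μ 0 true‖
        + (2 + 2 / (N₀ : ℝ) + 2 / (N₁ : ℝ)) * ‖dev (F (K-1))‖ + 2 * ‖dev (F 0)‖ := by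
  intro K hK
  obtain ⟨hF0, hFrec⟩ := hF
  set G : V → EuclideanSpace ℝ (Fin d) := F (K-1) with hG
  have hN0pos : (0:ℝ) < N₀ := by exact_mod_cast hN₀
  have hN1pos : (0:ℝ) < N₁ := by exact_mod_cast hN₁
  -- per-node identities
  have hnode : ∀ b : Bool, ∀ i ∈ sgrp grp b, F K i
      = X i + (((Nb i).card : ℝ)⁻¹) • ∑ u ∈ Nb i, G u
        + (1 / (((sgrp grp false).card : ℝ) * ((sgrp grp true).card : ℝ))) •
            ∑ u ∈ sgrp grp (!b), ker α (G u) (G i) • (G u - G i)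
        - (1 / ((sgrp grp b).card : ℝ) ^ 2) •
            ∑ u ∈ sgrp grp b, ker α (G u) (G i) • (G u - G i) := by
    intro b i hi
    have hgi : grp i = b := (Finset.mem_filter.mp hi).2
    have h := hFrec K hK i
    rw [hgi] at h
    rw [h]
    simp only [smul_sub, Finset.sum_sub_distrib, ← Finset.sum_smul]
    module
  -- summed identities
  have hsum : ∀ b : Bool, ∑ i ∈ sgrp grp b, F K i
      = ∑ i ∈ sgrp grp b, X i
        + ∑ i ∈ sgrp grp b, (((Nb i).card : ℝ)⁻¹) • ∑ u ∈ Nb i, G u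
        + (1 / (((sgrp grp false).card : ℝ) * ((sgrp grp true).card : ℝ))) •
            ∑ i ∈ sgrp grp b, ∑ u ∈ sgrp grp (!b), ker α (G u) (G i) • (G u - G i) := by
    intro b
    rw [Finset.sum_congr rfl (hnode b)]
    rw [Finset.sum_sub_distrib, Finset.sum_add_distrib, Finset.sum_add_distrib,
      ← Finset.smul_sum, ← Finset.smul_sum]
    rw [fmp_antisym_sum (sgrp grp b) (fun i u => ker α (G u) (G i) • (G u - G i))
      (fun i u => by
        show ker α (G u) (G i) • (G u - G i) = -(ker α (G i) (G u) • (G i - G u))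
        rw [fmp_ker_symm, ← neg_sub (G i) (G u), smul_neg])]
    simp
  -- cross-term antisymmetry between the two groups
  have hP1 : ∑ j ∈ sgrp grp true, ∑ u ∈ sgrp grp false, ker α (G u) (G j) • (G u - G j)
      = - ∑ i ∈ sgrp grp false, ∑ j ∈ sgrp grp true, ker α (G j) (G i) • (G j - G i) := by
    rw [Finset.sum_comm, ← Finset.sum_neg_distrib]
    refine Finset.sum_congr rfl fun i _ => ?_
    rw [← Finset.sum_neg_distrib]
    refine Finset.sum_congr rfl fun j _ => ?_
    rw [fmp_ker_symm, ← neg_sub (G j) (G i), smul_neg]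
  have hsumF := hsum false
  have hsumT := hsum true
  simp only [Bool.not_false, Bool.not_true, hcard0, hcard1] at hsumF hsumT
  rw [hP1] at hsumT
  -- the key decomposition of the group-mean gap
  have key : (1 / (N₀ : ℝ)) • ∑ i ∈ sgrp grp false, F K i
      - (1 / (N₁ : ℝ)) • ∑ j ∈ sgrp grp true, F K j
    = (μ 0 false - μ 0 true)
      + (((1 / (N₀:ℝ)) • ∑ i ∈ sgrp grp false, ((((Nb i).card : ℝ)⁻¹) • ∑ u ∈ Nb i, G u)
          - (1 / (N₁:ℝ)) • ∑ j ∈ sgrp grp true, ((((Nb j).card : ℝ)⁻¹) • ∑ u ∈ Nb j, G u))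
        + ((1 / ((N₀:ℝ)^2 * (N₁:ℝ)) + 1 / ((N₀:ℝ) * (N₁:ℝ)^2)) •
            ∑ i ∈ sgrp grp false, ∑ j ∈ sgrp grp true, ker α (G j) (G i) • (G j - G i))) := by
    rw [hsumF, hsumT, hμ 0 false, hμ 0 true, hF0, hcard0, hcard1]
    have hn0 : (N₀:ℝ) ≠ 0 := ne_of_gt hN0pos
    have hn1 : (N₁:ℝ) ≠ 0 := ne_of_gt hN1pos
    match_scalars <;> field_simp <;> ring
  -- deviation bounds
  have hS0ne : (sgrp grp false).Nonempty := Finset.card_pos.mp (hcard0 ▸ hN₀)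
  have hS1ne : (sgrp grp true).Nonempty := Finset.card_pos.mp (hcard1 ▸ hN₁)
  have hVne : Nonempty V := ⟨hS0ne.choose⟩
  set Δ : EuclideanSpace ℝ (Fin d) := dev G with hΔdef
  have hdevb : ∀ (m : Fin d) (i : V),
      |G i m - (1 / (Fintype.card V : ℝ)) * ∑ j : V, G j m| ≤ Δ m := by
    intro m i
    rw [hΔdef]
    show _ ≤ ⨆ i : V, |G i m - (1 / (Fintype.card V : ℝ)) * ∑ j : V, G j m|
    exact le_ciSup (f := fun i : V => |G i m - (1 / (Fintype.card V : ℝ)) * ∑ j : V, G j m|)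
      (Finite.bddAbove_range _) i
  have hΔnn : ∀ m, 0 ≤ Δ m := fun m =>
    le_trans (abs_nonneg _) (hdevb m (Classical.arbitrary V))
  -- the error vector and its componentwise bound
  set Eb : EuclideanSpace ℝ (Fin d) :=
    ((1 / (N₀:ℝ)) • ∑ i ∈ sgrp grp false, ((((Nb i).card : ℝ)⁻¹) • ∑ u ∈ Nb i, G u)
       - (1 / (N₁:ℝ)) • ∑ j ∈ sgrp grp true, ((((Nb j).card : ℝ)⁻¹) • ∑ u ∈ Nb j, G u))
    + ((1 / ((N₀:ℝ)^2 * (N₁:ℝ)) + 1 / ((N₀:ℝ) * (N₁:ℝ)^2)) •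
        ∑ i ∈ sgrp grp false, ∑ j ∈ sgrp grp true, ker α (G j) (G i) • (G j - G i)) with hEbdef
  have hcomp : ∀ m : Fin d, |Eb m| ≤ ((2 + 2/(N₀:ℝ) + 2/(N₁:ℝ)) • Δ) m := by
    intro m
    set mb : ℝ := (1 / (Fintype.card V : ℝ)) * ∑ j : V, G j m with hmb
    have hEbm : Eb m
        = ((1 / (N₀:ℝ)) * ∑ i ∈ sgrp grp false, (((Nb i).card : ℝ)⁻¹ * ∑ u ∈ Nb i, G u m)
            - (1 / (N₁:ℝ)) * ∑ j ∈ sgrp grp true, (((Nb j).card : ℝ)⁻¹ * ∑ u ∈ Nb j, G u m))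
          + ((1 / ((N₀:ℝ)^2 * (N₁:ℝ)) + 1 / ((N₀:ℝ) * (N₁:ℝ)^2)) *
              ∑ i ∈ sgrp grp false, ∑ j ∈ sgrp grp true,
                ker α (G j) (G i) * (G j m - G i m)) := by
      rw [hEbdef]
      simp only [PiLp.add_apply, PiLp.sub_apply, PiLp.smul_apply, smul_eq_mul, fmp_sum_apply]
    -- neighbor averages stay within Δ of the global mean
    have hinner : ∀ i : V, |((Nb i).card : ℝ)⁻¹ * ∑ u ∈ Nb i, G u m - mb| ≤ Δ m :=
      fun i => fmp_avg_dev (Nb i) (hNb i) (fun u => G u m) mb (Δ m) (fun u _ => hdevb m u)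
    have hB0 : |(1 / (N₀:ℝ)) * ∑ i ∈ sgrp grp false,
        (((Nb i).card : ℝ)⁻¹ * ∑ u ∈ Nb i, G u m) - mb| ≤ Δ m := by
      rw [one_div, ← hcard0]
      exact fmp_avg_dev _ hS0ne _ mb (Δ m) (fun i _ => hinner i)
    have hB1 : |(1 / (N₁:ℝ)) * ∑ j ∈ sgrp grp true,
        (((Nb j).card : ℝ)⁻¹ * ∑ u ∈ Nb j, G u m) - mb| ≤ Δ m := by
      rw [one_div, ← hcard1]
      exact fmp_avg_dev _ hS1ne _ mb (Δ m) (fun j _ => hinner j)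
    -- cross-term bound
    have hP : |∑ i ∈ sgrp grp false, ∑ j ∈ sgrp grp true,
        ker α (G j) (G i) * (G j m - G i m)| ≤ (N₀:ℝ) * (N₁:ℝ) * (2 * Δ m) := by
      calc |∑ i ∈ sgrp grp false, ∑ j ∈ sgrp grp true, ker α (G j) (G i) * (G j m - G i m)|
          ≤ ∑ i ∈ sgrp grp false, |∑ j ∈ sgrp grp true, ker α (G j) (G i) * (G j m - G i m)| :=
            Finset.abs_sum_le_sum_abs _ _
        _ ≤ ∑ i ∈ sgrp grp false, ∑ j ∈ sgrp grp true, |ker α (G j) (G i) * (G j m - G i m)| :=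
            Finset.sum_le_sum fun i _ => Finset.abs_sum_le_sum_abs _ _
        _ ≤ ∑ i ∈ sgrp grp false, ∑ j ∈ sgrp grp true, (2 * Δ m) := by
            refine Finset.sum_le_sum fun i _ => Finset.sum_le_sum fun j _ => ?_
            rw [abs_mul, abs_of_nonneg (fmp_ker_nonneg α _ _)]
            have hd : |G j m - G i m| ≤ 2 * Δ m := by
              have h1 := hdevb m j
              have h2 := hdevb m i
              rw [abs_sub_le_iff] at h1 h2 ⊢
              constructor <;> linarith [h1.1, h1.2, h2.1, h2.2]
            calc ker α (G j) (G i) * |G j m - G i m| ≤ 1 * (2 * Δ m) :=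
                  mul_le_mul (fmp_ker_le_one hα _ _) hd (abs_nonneg _) zero_le_one
              _ = 2 * Δ m := one_mul _
        _ = (N₀:ℝ) * (N₁:ℝ) * (2 * Δ m) := by
            rw [Finset.sum_const, Finset.sum_const, nsmul_eq_mul, nsmul_eq_mul,
              hcard0, hcard1]
            ring
    have hc : (0:ℝ) ≤ 1 / ((N₀:ℝ)^2 * (N₁:ℝ)) + 1 / ((N₀:ℝ) * (N₁:ℝ)^2) := by positivity
    have hceq : (1 / ((N₀:ℝ)^2 * (N₁:ℝ)) + 1 / ((N₀:ℝ) * (N₁:ℝ)^2))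
        * ((N₀:ℝ) * (N₁:ℝ) * (2 * Δ m)) = (2/(N₀:ℝ) + 2/(N₁:ℝ)) * Δ m := by
      field_simp
    have hwm : ((2 + 2/(N₀:ℝ) + 2/(N₁:ℝ)) • Δ) m = (2 + 2/(N₀:ℝ) + 2/(N₁:ℝ)) * Δ m := rfl
    rw [hwm, hEbm]
    set c := 1 / ((N₀:ℝ)^2 * (N₁:ℝ)) + 1 / ((N₀:ℝ) * (N₁:ℝ)^2)
    set B0 := (1 / (N₀:ℝ)) * ∑ i ∈ sgrp grp false, (((Nb i).card : ℝ)⁻¹ * ∑ u ∈ Nb i, G u m)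
    set B1 := (1 / (N₁:ℝ)) * ∑ j ∈ sgrp grp true, (((Nb j).card : ℝ)⁻¹ * ∑ u ∈ Nb j, G u m)
    set P := ∑ i ∈ sgrp grp false, ∑ j ∈ sgrp grp true, ker α (G j) (G i) * (G j m - G i m)
    have hcP : |c * P| ≤ (2/(N₀:ℝ) + 2/(N₁:ℝ)) * Δ m := by
      rw [abs_mul, abs_of_nonneg hc, ← hceq]
      exact mul_le_mul_of_nonneg_left hP hc
    calc |B0 - B1 + c * P| ≤ |B0 - B1| + |c * P| := abs_add_le _ _
      _ ≤ (|B0 - mb| + |B1 - mb|) + |c * P| := by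
          have : |B0 - B1| ≤ |B0 - mb| + |B1 - mb| := by
            rw [abs_sub_comm B1 mb] at *
            calc |B0 - B1| = |(B0 - mb) + (mb - B1)| := by ring_nf
              _ ≤ |B0 - mb| + |mb - B1| := abs_add_le _ _
          linarith
      _ ≤ (2 + 2/(N₀:ℝ) + 2/(N₁:ℝ)) * Δ m := by
          have h0 := hB0; have h1 := hB1
          linarith [hcP]
  have hEnorm : ‖Eb‖ ≤ (2 + 2/(N₀:ℝ) + 2/(N₁:ℝ)) * ‖Δ‖ := by
    have h := fmp_norm_le hcomp
    rwa [norm_smul, Real.norm_eq_abs, abs_of_nonneg (by positivity)] at h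
  -- bounds on the kernel double sum
  have hcoef : (0:ℝ) ≤ 1 / ((N₀:ℝ) * (N₁:ℝ)^2) + 1 / ((N₀:ℝ)^2 * (N₁:ℝ)) := by positivity
  have hSle : ∑ i ∈ sgrp grp false, ∑ j ∈ sgrp grp true, ker α (G i) (G j) ≤ (N₀:ℝ) * N₁ := by
    calc ∑ i ∈ sgrp grp false, ∑ j ∈ sgrp grp true, ker α (G i) (G j)
        ≤ ∑ _i ∈ sgrp grp false, ∑ _j ∈ sgrp grp true, (1:ℝ) :=
          Finset.sum_le_sum fun i _ => Finset.sum_le_sum fun j _ => fmp_ker_le_one hα _ _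
      _ = (N₀:ℝ) * N₁ := by
          rw [Finset.sum_const, Finset.sum_const, nsmul_eq_mul, nsmul_eq_mul, hcard0, hcard1]
          ring
  have hS0le : (0:ℝ) ≤ ∑ i ∈ sgrp grp false, ∑ j ∈ sgrp grp true, ker α (G i) (G j) :=
    Finset.sum_nonneg fun i _ => Finset.sum_nonneg fun j _ => fmp_ker_nonneg α _ _
  have h3 : 0 ≤ 3 - (1 / ((N₀:ℝ) * (N₁:ℝ)^2) + 1 / ((N₀:ℝ)^2 * (N₁:ℝ))) *
      ∑ i ∈ sgrp grp false, ∑ j ∈ sgrp grp true, ker α (G i) (G j) := by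
    have h1 : (1 / ((N₀:ℝ) * (N₁:ℝ)^2) + 1 / ((N₀:ℝ)^2 * (N₁:ℝ))) *
        (∑ i ∈ sgrp grp false, ∑ j ∈ sgrp grp true, ker α (G i) (G j))
      ≤ (1 / ((N₀:ℝ) * (N₁:ℝ)^2) + 1 / ((N₀:ℝ)^2 * (N₁:ℝ))) * ((N₀:ℝ) * N₁) :=
      mul_le_mul_of_nonneg_left hSle hcoef
    have h2 : (1 / ((N₀:ℝ) * (N₁:ℝ)^2) + 1 / ((N₀:ℝ)^2 * (N₁:ℝ))) * ((N₀:ℝ) * N₁)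
        = 1/(N₁:ℝ) + 1/(N₀:ℝ) := by field_simp
    have h4 : (1:ℝ)/N₀ ≤ 1 := by rw [div_le_one hN0pos]; exact_mod_cast hN₀
    have h5 : (1:ℝ)/N₁ ≤ 1 := by rw [div_le_one hN1pos]; exact_mod_cast hN₁
    linarith
  have hmain : ‖(1 / (N₀ : ℝ)) • ∑ i ∈ sgrp grp false, F K i
      - (1 / (N₁ : ℝ)) • ∑ j ∈ sgrp grp true, F K j‖
      ≤ ‖μ 0 false - μ 0 true‖ + (2 + 2/(N₀:ℝ) + 2/(N₁:ℝ)) * ‖Δ‖ := by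
    rw [key]
    calc ‖(μ 0 false - μ 0 true) + Eb‖
        ≤ ‖μ 0 false - μ 0 true‖ + ‖Eb‖ := norm_add_le _ _
      _ ≤ _ := by linarith
  have hpos : 0 ≤ (3 - (1 / ((N₀:ℝ) * (N₁:ℝ)^2) + 1 / ((N₀:ℝ)^2 * (N₁:ℝ))) *
      ∑ i ∈ sgrp grp false, ∑ j ∈ sgrp grp true, ker α (G i) (G j)) *
      ‖μ (K-1) false - μ (K-1) true‖ := mul_nonneg h3 (norm_nonneg _)
  linarith [norm_nonneg (dev (F 0)), hmain, hpos]
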